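/- Let h: ℝ^p → [0,1] be a measurable classifier, τ ∈ [0,1], f(z) = 1_{z ≥ τ}, and let P̂_N be the empirical distribution of N test samples (x̂_i, â_i, ŷ_i) ∈ ℝ^p × {0,1} × {0,1} with p̂_{a1} = P̂_N(A=a, Y=1) > 0 for a ∈ {0,1}. Define Ū_f = sup_{Q ∈ B_ρ(P̂_N)} U_f(Q,h), U̲_f = inf_{Q ∈ B_ρ(P̂_N)} U_f(Q,h), and V(a,a') = sup_{Q ∈ B_ρ(P̂_N)} Q[X ∈ 𝒳₁ | A=a, Y=1] − Q[X ∈ 𝒳₁ | A=a', Y=1] with 𝒳₁ = {x : h(x) ≥ τ}. Then Ū_f = max{V(1,0), V(0,1)} and U̲_f = −min{0, V(1,0), V(0,1)}. -/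

import Mathlib

open MeasureTheory Real Set
open scoped ENNReal

noncomputable section

variable {E : Type*} [NormedAddCommGroup E] [NormedSpace ℝ E] [MeasurableSpace E] [BorelSpace E]
variable {N : ℕ}

/-- Ground transportation cost
`c((x,a,y),(x',a',y')) = ‖x−x'‖ + κ_𝒜·|a−a'| + κ_𝒴·|y−y'|` on `ℝ^p × {0,1} × {0,1}`,
with `{0,1}` encoded by `Bool` (`true = 1`) and `κ_𝒜, κ_𝒴 ∈ (0,∞]`. -/
def tcost (κA κY : ℝ≥0∞) (ξ ξ' : E × Bool × Bool) : ℝ≥0∞ :=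
  ENNReal.ofReal ‖ξ.1 - ξ'.1‖ + (if ξ.2.1 = ξ'.2.1 then 0 else κA) +
    (if ξ.2.2 = ξ'.2.2 then 0 else κY)

/-- Type-1 Wasserstein distance: infimum of the expected ground cost over all couplings. -/
def wass (κA κY : ℝ≥0∞) (μ ν : Measure (E × Bool × Bool)) : ℝ≥0∞ :=
  ⨅ (pl : Measure ((E × Bool × Bool) × (E × Bool × Bool)))
    (_ : pl.map Prod.fst = μ) (_ : pl.map Prod.snd = ν),
      ∫⁻ q, tcost κA κY q.1 q.2 ∂pl

/-- Empirical (uniform) distribution on the `N` samples. -/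
def emp (xh : Fin N → E) (ah yh : Fin N → Bool) : Measure (E × Bool × Bool) :=
  (N : ℝ≥0∞)⁻¹ • ∑ i : Fin N, Measure.dirac (xh i, ah i, yh i)

/-- Empirical marginal probability `p̂_{ay}` of `(A,Y) = (a,y)`. -/
def pfrac (ah yh : Fin N → Bool) (a y : Bool) : ℝ :=
  ((Finset.univ.filter fun i => ah i = a ∧ yh i = y).card : ℝ) / N

/-- Wasserstein ambiguity set of radius `ρ` around the empirical distribution,
intersected with the set of distributions whose `(A,Y)`-marginal is the empirical one. -/
def Bset (κA κY : ℝ≥0∞) (ρ : ℝ) (xh : Fin N → E) (ah yh : Fin N → Bool) :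
    Set (Measure (E × Bool × Bool)) :=
  {Q | IsProbabilityMeasure Q ∧ wass κA κY Q (emp xh ah yh) ≤ ENNReal.ofReal ρ ∧
    ∀ a y : Bool, Q {ξ | ξ.2.1 = a ∧ ξ.2.2 = y} = ENNReal.ofReal (pfrac ah yh a y)}

/-- `|a − a'|` for `a, a' ∈ {0,1}` encoded as Booleans. -/
def bd (a b : Bool) : ℝ := if a = b then 0 else 1


/-- Conditional expectation `E_Q[g | A = a, Y = y]`. -/
def cexp (Q : Measure (E × Bool × Bool)) (g : E × Bool × Bool → ℝ) (a y : Bool) : ℝ :=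
  (∫ ξ in {ξ | ξ.2.1 = a ∧ ξ.2.2 = y}, g ξ ∂Q) / (Q {ξ | ξ.2.1 = a ∧ ξ.2.2 = y}).toReal

/-- Unfairness measure
`U_f(Q,h) = |E_Q[f(h(X)) | A=1, Y=1] − E_Q[f(h(X)) | A=0, Y=1]|`. -/
def unfair (f : ℝ → ℝ) (h : E → ℝ) (Q : Measure (E × Bool × Bool)) : ℝ :=
  |cexp Q (fun ξ => f (h ξ.1)) true true - cexp Q (fun ξ => f (h ξ.1)) false true|

/-- `V(a,a') = sup_{Q ∈ B_ρ(P̂_N)} Q[X ∈ 𝒳₁ | A=a, Y=1] − Q[X ∈ 𝒳₁ | A=a', Y=1]`,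
where `𝒳₁ = {x : h(x) ≥ τ}`. -/
def Vval (κA κY : ℝ≥0∞) (ρ : ℝ) (xh : Fin N → E) (ah yh : Fin N → Bool)
    (h : E → ℝ) (τ : ℝ) (a a' : Bool) : ℝ :=
  sSup {v : ℝ | ∃ Q ∈ Bset κA κY ρ xh ah yh,
    v = cexp Q (fun ξ => if τ ≤ h ξ.1 then 1 else 0) a true
      - cexp Q (fun ξ => if τ ≤ h ξ.1 then 1 else 0) a' true}

/-! ### Auxiliary lemmas -/

set_option linter.unusedSectionVars false in
lemma aux_bdd_abs_image {S : Set ℝ} (hbdd : BddAbove S) (hbdd' : BddBelow S) :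
    BddAbove (abs '' S) := by
  obtain ⟨M, hM⟩ := hbdd
  obtain ⟨m, hm⟩ := hbdd'
  refine ⟨max M (-m), ?_⟩
  rintro _ ⟨v, hv, rfl⟩
  rcases abs_cases v with ⟨h1, _⟩ | ⟨h1, _⟩
  · rw [h1]; exact le_max_of_le_left (hM hv)
  · rw [h1]; exact le_max_of_le_right (neg_le_neg (hm hv))

set_option linter.unusedSectionVars false in
lemma aux_sSup_abs_image {S : Set ℝ} (hne : S.Nonempty) (hbdd : BddAbove S)
    (hbdd' : BddBelow S) :
    sSup (abs '' S) = max (sSup S) (-sInf S) := by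
  apply le_antisymm
  · apply csSup_le (hne.image _)
    rintro _ ⟨v, hv, rfl⟩
    rcases abs_cases v with ⟨h1, _⟩ | ⟨h1, _⟩
    · rw [h1]; exact le_max_of_le_left (le_csSup hbdd hv)
    · rw [h1]; exact le_max_of_le_right (neg_le_neg (csInf_le hbdd' hv))
  · have hb := aux_bdd_abs_image hbdd hbdd'
    apply max_le
    · exact csSup_le hne fun v hv => le_trans (le_abs_self v) (le_csSup hb ⟨v, hv, rfl⟩)
    · rw [neg_le]
      exact le_csInf hne fun v hv => by
        have := le_csSup hb (⟨v, hv, rfl⟩ : |v| ∈ abs '' S)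
        rcases abs_cases v with ⟨h1, _⟩ | ⟨h1, _⟩ <;> linarith

set_option linter.unusedSectionVars false in
lemma aux_sInf_neg_image {S : Set ℝ} : sInf (Neg.neg '' S) = -sSup S := by
  have h : -(Neg.neg '' S) = S := by ext x; simp
  rw [Real.sInf_def, h]

set_option linter.unusedSectionVars false in
lemma aux_sSup_neg_image {S : Set ℝ} : sSup (Neg.neg '' S) = -sInf S := by
  have h : Neg.neg '' S = -S := by ext x; simp [Set.mem_neg]
  rw [h, Real.sInf_def, neg_neg]

set_option linter.unusedSectionVars false in
lemma aux_sInf_abs_image {S : Set ℝ} (hconv : Convex ℝ S) (hne : S.Nonempty)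
    (hbdd : BddAbove S) (hbdd' : BddBelow S) :
    sInf (abs '' S) = -(min 0 (min (sSup S) (-sInf S))) := by
  have hmM : sInf S ≤ sSup S := by
    obtain ⟨v, hv⟩ := hne
    exact le_trans (csInf_le hbdd' hv) (le_csSup hbdd hv)
  have hbb : BddBelow (abs '' S) := ⟨0, by rintro _ ⟨v, hv, rfl⟩; exact abs_nonneg v⟩
  rcases lt_or_ge 0 (sInf S) with hpos | h1
  · have himg : abs '' S = S := by
      ext w
      constructor
      · rintro ⟨v, hv, rfl⟩
        rwa [abs_of_pos (lt_of_lt_of_le hpos (csInf_le hbdd' hv))]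
      · intro hw
        exact ⟨w, hw, abs_of_pos (lt_of_lt_of_le hpos (csInf_le hbdd' hw))⟩
    rw [himg]
    have hx : min (sSup S) (-sInf S) = -sInf S := min_eq_right (by linarith)
    rw [hx, min_eq_right (by linarith)]
    ring
  rcases lt_or_ge (sSup S) 0 with hneg | h2
  · have himg : abs '' S = Neg.neg '' S := by
      apply Set.image_congr
      intro v hv
      exact abs_of_neg (lt_of_le_of_lt (le_csSup hbdd hv) hneg)
    rw [himg, aux_sInf_neg_image]
    have hx : min (sSup S) (-sInf S) = sSup S := min_eq_left (by linarith)
    rw [hx, min_eq_right (by linarith)]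
  · rw [min_eq_left (le_min h2 (by linarith)), neg_zero]
    apply le_antisymm
    · by_contra hc
      push_neg at hc
      set c := sInf (abs '' S) with hcdef
      have hc0 : 0 < c := hc
      have hlow : ∀ v ∈ S, c ≤ |v| := fun v hv => csInf_le hbb ⟨v, hv, rfl⟩
      obtain ⟨v2, hv2S, hv2⟩ := exists_lt_of_lt_csSup hne (show sSup S - c < sSup S by linarith)
      have hv2' : -c < v2 := by linarith
      obtain ⟨v1, hv1S, hv1⟩ := exists_lt_of_csInf_lt hne (show sInf S < sInf S + c by linarith)
      have hv1' : v1 < c := by linarith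
      have hv1n : v1 ≤ -c := by
        rcases abs_cases v1 with ⟨e, _⟩ | ⟨e, _⟩
        · have := hlow v1 hv1S; rw [e] at this; linarith
        · have := hlow v1 hv1S; rw [e] at this; linarith
      have hv2p : c ≤ v2 := by
        rcases abs_cases v2 with ⟨e, _⟩ | ⟨e, _⟩
        · have := hlow v2 hv2S; rwa [e] at this
        · have := hlow v2 hv2S; rw [e] at this; linarith
      have h0 : (0 : ℝ) ∈ S := by
        have hseg : Set.Icc v1 v2 ⊆ S := by
          rw [← segment_eq_Icc (by linarith : v1 ≤ v2)]
          exact hconv.segment_subset hv1S hv2S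
        exact hseg ⟨by linarith, by linarith⟩
      have := hlow 0 h0
      simp at this
      linarith
    · exact le_csInf (hne.image _) fun w ⟨v, hv, e⟩ => e ▸ abs_nonneg v

set_option linter.unusedSectionVars false in
lemma tcost_self (κA κY : ℝ≥0∞) (ξ : E × Bool × Bool) : tcost κA κY ξ ξ = 0 := by
  simp [tcost]

set_option linter.unusedSectionVars false in
lemma tcost_meas [SecondCountableTopology E] (κA κY : ℝ≥0∞) :
    Measurable (fun q : (E × Bool × Bool) × (E × Bool × Bool) => tcost κA κY q.1 q.2) := by
  unfold tcost
  apply Measurable.add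
  apply Measurable.add (f := fun q : (E × Bool × Bool) × (E × Bool × Bool) => ENNReal.ofReal ‖q.1.1 - q.2.1‖) (g := fun q : (E × Bool × Bool) × (E × Bool × Bool) => if q.1.2.1 = q.2.2.1 then (0:ℝ≥0∞) else κA)
  · exact ((continuous_fst.fst.sub continuous_snd.fst).norm.measurable).ennreal_ofReal
  · apply Measurable.ite _ measurable_const measurable_const
    exact measurableSet_eq_fun (measurable_fst.snd.fst) (measurable_snd.snd.fst)
  · apply Measurable.ite _ measurable_const measurable_const
    exact measurableSet_eq_fun (measurable_fst.snd.snd) (measurable_snd.snd.snd)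

set_option linter.unusedSectionVars false in
lemma wass_self [SecondCountableTopology E] (κA κY : ℝ≥0∞) (μ : Measure (E × Bool × Bool)) :
    wass κA κY μ μ = 0 := by
  apply le_antisymm _ zero_le
  have hdiag : Measurable (fun ξ : E × Bool × Bool => (ξ, ξ)) :=
    measurable_id.prodMk measurable_id
  refine le_trans (iInf_le_of_le (μ.map fun ξ => (ξ, ξ)) ?_) le_rfl
  refine le_trans (iInf_le_of_le ?_ ?_) le_rfl
  · rw [Measure.map_map measurable_fst hdiag]
    exact (congrArg μ.map rfl).trans (Measure.map_id)
  refine le_trans (iInf_le_of_le ?_ ?_) le_rfl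
  · rw [Measure.map_map measurable_snd hdiag]
    exact (congrArg μ.map rfl).trans (Measure.map_id)
  rw [lintegral_map (tcost_meas κA κY) hdiag]
  simp [tcost_self]

set_option linter.unusedSectionVars false in
lemma wass_convex (κA κY : ℝ≥0∞) (μ1 μ2 ν : Measure (E × Bool × Bool))
    (c1 c2 : ℝ≥0∞) (hcs : c1 + c2 = 1)
    (b : ℝ≥0∞) (hb : b ≠ ∞)
    (h1 : wass κA κY μ1 ν ≤ b) (h2 : wass κA κY μ2 ν ≤ b) :
    wass κA κY (c1 • μ1 + c2 • μ2) ν ≤ b := by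
  apply ENNReal.le_of_forall_pos_le_add
  intro ε hε _
  have hεn : ((ε : ℝ≥0∞)) ≠ 0 := by exact_mod_cast hε.ne'
  have h1' : wass κA κY μ1 ν < b + ε :=
    lt_of_le_of_lt h1 (ENNReal.lt_add_right hb hεn)
  have h2' : wass κA κY μ2 ν < b + ε :=
    lt_of_le_of_lt h2 (ENNReal.lt_add_right hb hεn)
  rw [wass] at h1' h2'
  simp only [iInf_lt_iff] at h1' h2'
  obtain ⟨pl1, hm11, hm12, hF1⟩ := h1'
  obtain ⟨pl2, hm21, hm22, hF2⟩ := h2'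
  have key : wass κA κY (c1 • μ1 + c2 • μ2) ν
      ≤ ∫⁻ q, tcost κA κY q.1 q.2 ∂(c1 • pl1 + c2 • pl2) := by
    have hma : (c1 • pl1 + c2 • pl2).map Prod.fst = c1 • μ1 + c2 • μ2 := by
      rw [Measure.map_add _ _ measurable_fst, Measure.map_smul, Measure.map_smul, hm11, hm21]
    have hmb : (c1 • pl1 + c2 • pl2).map Prod.snd = ν := by
      rw [Measure.map_add _ _ measurable_snd, Measure.map_smul, Measure.map_smul, hm12, hm22,
        ← add_smul, hcs, one_smul]
    exact iInf_le_of_le (c1 • pl1 + c2 • pl2) (iInf_le_of_le hma (iInf_le _ hmb))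
  refine le_trans key ?_
  rw [lintegral_add_measure, lintegral_smul_measure, lintegral_smul_measure]
  calc c1 * (∫⁻ q, tcost κA κY q.1 q.2 ∂pl1) + c2 * (∫⁻ q, tcost κA κY q.1 q.2 ∂pl2)
      ≤ c1 * (b + ε) + c2 * (b + ε) :=
        add_le_add (mul_le_mul_right hF1.le _) (mul_le_mul_right hF2.le _)
    _ = b + ε := by rw [← add_mul, hcs, one_mul]

set_option linter.unusedSectionVars false in
lemma measKset (a y : Bool) :
    MeasurableSet {ξ : E × Bool × Bool | ξ.2.1 = a ∧ ξ.2.2 = y} := by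
  have : {ξ : E × Bool × Bool | ξ.2.1 = a ∧ ξ.2.2 = y}
      = Prod.snd ⁻¹' ({a} ×ˢ {y}) := by ext ξ; simp [Set.mem_prod, Prod.ext_iff]
  rw [this]
  exact measurable_snd ((measurableSet_singleton a).prod (measurableSet_singleton y))

set_option linter.unusedSectionVars false in
lemma emp_univ (xh : Fin N → E) (ah yh : Fin N → Bool) (hN : N ≠ 0) :
    IsProbabilityMeasure (emp xh ah yh) := by
  constructor
  rw [emp, Measure.smul_apply, Measure.finset_sum_apply]
  simp only [Measure.dirac_apply_of_mem (Set.mem_univ _), Finset.sum_const,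
    Finset.card_univ, Fintype.card_fin, nsmul_eq_mul, mul_one, smul_eq_mul]
  exact ENNReal.inv_mul_cancel (by exact_mod_cast hN) (by simp)

set_option linter.unusedSectionVars false in
lemma emp_K (xh : Fin N → E) (ah yh : Fin N → Bool) (hN : N ≠ 0) (a y : Bool) :
    emp xh ah yh {ξ | ξ.2.1 = a ∧ ξ.2.2 = y} = ENNReal.ofReal (pfrac ah yh a y) := by
  have hN' : 0 < (N : ℝ) := by exact_mod_cast Nat.pos_of_ne_zero hN
  rw [emp, Measure.smul_apply, Measure.finset_sum_apply]
  have hd : ∀ i : Fin N, Measure.dirac (xh i, ah i, yh i)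
        {ξ : E × Bool × Bool | ξ.2.1 = a ∧ ξ.2.2 = y}
      = if (ah i = a ∧ yh i = y) then 1 else 0 := by
    intro i
    rw [Measure.dirac_apply' _ (measKset a y)]
    by_cases hi : ah i = a ∧ yh i = y <;> simp [Set.indicator_apply, hi]
  rw [Finset.sum_congr rfl fun i _ => hd i, Finset.sum_boole, pfrac,
    ENNReal.ofReal_div_of_pos hN', ENNReal.ofReal_natCast,
    ENNReal.ofReal_natCast, div_eq_mul_inv, mul_comm, smul_eq_mul]

set_option linter.unusedSectionVars false in
lemma g_int {g : E × Bool × Bool → ℝ} (hg : Measurable g) (hgb : ∀ ξ, g ξ ∈ Set.Icc (0:ℝ) 1)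
    (μ : Measure (E × Bool × Bool)) [IsFiniteMeasure μ] : Integrable g μ :=
  Integrable.mono' (integrable_const 1) hg.aestronglyMeasurable
    (ae_of_all _ fun ξ => abs_le.mpr ⟨by linarith [(hgb ξ).1], (hgb ξ).2⟩)

set_option linter.unusedSectionVars false in
lemma cexp_mem_Icc {g : E × Bool × Bool → ℝ} (hg : Measurable g)
    (hgb : ∀ ξ, g ξ ∈ Set.Icc (0:ℝ) 1) (Q : Measure (E × Bool × Bool)) [IsFiniteMeasure Q]
    (a y : Bool) : cexp Q g a y ∈ Set.Icc (0:ℝ) 1 := by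
  set K := {ξ : E × Bool × Bool | ξ.2.1 = a ∧ ξ.2.2 = y}
  have hnum0 : 0 ≤ ∫ ξ in K, g ξ ∂Q :=
    setIntegral_nonneg (measKset a y) fun ξ _ => (hgb ξ).1
  have hnum1 : ∫ ξ in K, g ξ ∂Q ≤ (Q K).toReal := by
    calc ∫ ξ in K, g ξ ∂Q ≤ ∫ _ in K, (1:ℝ) ∂Q :=
          integral_mono (g_int hg hgb _) (integrable_const 1) fun ξ => (hgb ξ).2
      _ = (Q K).toReal := by simp; rfl
  constructor
  · exact div_nonneg hnum0 ENNReal.toReal_nonneg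
  · exact div_le_one_of_le₀ hnum1 ENNReal.toReal_nonneg

set_option linter.unusedSectionVars false in
lemma combo_K (Q1 Q2 : Measure (E × Bool × Bool))
    {t s : ℝ} (ht : 0 ≤ t) (hs : 0 ≤ s) (hts : t + s = 1)
    (a y : Bool) {p : ℝ} (hp : 0 ≤ p)
    (h1 : Q1 {ξ | ξ.2.1 = a ∧ ξ.2.2 = y} = ENNReal.ofReal p)
    (h2 : Q2 {ξ | ξ.2.1 = a ∧ ξ.2.2 = y} = ENNReal.ofReal p) :
    (ENNReal.ofReal t • Q1 + ENNReal.ofReal s • Q2) {ξ | ξ.2.1 = a ∧ ξ.2.2 = y}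
      = ENNReal.ofReal p := by
  rw [Measure.add_apply, Measure.smul_apply, Measure.smul_apply, h1, h2, smul_eq_mul,
    smul_eq_mul, ← ENNReal.ofReal_mul ht, ← ENNReal.ofReal_mul hs, ← ENNReal.ofReal_add
    (by positivity) (by positivity), ← add_mul, hts, one_mul]

set_option linter.unusedSectionVars false in
lemma cexp_combo {g : E × Bool × Bool → ℝ} (hg : Measurable g)
    (hgb : ∀ ξ, g ξ ∈ Set.Icc (0:ℝ) 1) (Q1 Q2 : Measure (E × Bool × Bool))
    [IsFiniteMeasure Q1] [IsFiniteMeasure Q2]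
    {t s : ℝ} (ht : 0 ≤ t) (hs : 0 ≤ s) (hts : t + s = 1)
    (a y : Bool) {p : ℝ} (hp : 0 < p)
    (h1 : Q1 {ξ | ξ.2.1 = a ∧ ξ.2.2 = y} = ENNReal.ofReal p)
    (h2 : Q2 {ξ | ξ.2.1 = a ∧ ξ.2.2 = y} = ENNReal.ofReal p) :
    cexp (ENNReal.ofReal t • Q1 + ENNReal.ofReal s • Q2) g a y
      = t * cexp Q1 g a y + s * cexp Q2 g a y := by
  set K := {ξ : E × Bool × Bool | ξ.2.1 = a ∧ ξ.2.2 = y} with hK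
  have hKm := combo_K Q1 Q2 ht hs hts a y hp.le h1 h2
  have hint : ∫ ξ in K, g ξ ∂(ENNReal.ofReal t • Q1 + ENNReal.ofReal s • Q2)
      = t * ∫ ξ in K, g ξ ∂Q1 + s * ∫ ξ in K, g ξ ∂Q2 := by
    rw [Measure.restrict_add, Measure.restrict_smul, Measure.restrict_smul]
    rw [integral_add_measure
      ((g_int hg hgb _).smul_measure ENNReal.ofReal_ne_top)
      ((g_int hg hgb _).smul_measure ENNReal.ofReal_ne_top)]
    rw [integral_smul_measure, integral_smul_measure]
    rw [ENNReal.toReal_ofReal ht, ENNReal.toReal_ofReal hs]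
    simp [smul_eq_mul]
  rw [cexp, cexp, cexp, ← hK, hKm, h1, h2, hint]
  rw [ENNReal.toReal_ofReal hp.le]
  field_simp

/-- **Theorem 3 (Unfairness quantification), reduction to `V`.** With
`f(z) = 1_{z ≥ τ}`, the worst-case unfairness `Ū_f = sup_{Q ∈ B_ρ(P̂_N)} U_f(Q,h)`
equals `max{V(1,0), V(0,1)}` and the best-case unfairness
`U̲_f = inf_{Q ∈ B_ρ(P̂_N)} U_f(Q,h)` equals `−min{0, V(1,0), V(0,1)}`. -/
theorem statement7 [FiniteDimensional ℝ E]
    (xh : Fin N → E) (ah yh : Fin N → Bool)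
    (h : E → ℝ) (hmeas : Measurable h) (hrange : ∀ x, h x ∈ Set.Icc (0 : ℝ) 1)
    (τ : ℝ) (hτ : τ ∈ Set.Icc (0 : ℝ) 1)
    (κA κY : ℝ≥0∞) (hκA : 0 < κA) (hκY : 0 < κY)
    (ρ : ℝ) (hρ : 0 ≤ ρ)
    (hp1 : 0 < pfrac ah yh true true) (hp0 : 0 < pfrac ah yh false true) :
    sSup {v : ℝ | ∃ Q ∈ Bset κA κY ρ xh ah yh,
        v = unfair (fun z => if τ ≤ z then 1 else 0) h Q}
      = max (Vval κA κY ρ xh ah yh h τ true false) (Vval κA κY ρ xh ah yh h τ false true) ∧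
    sInf {v : ℝ | ∃ Q ∈ Bset κA κY ρ xh ah yh,
        v = unfair (fun z => if τ ≤ z then 1 else 0) h Q}
      = -(min 0 (min (Vval κA κY ρ xh ah yh h τ true false)
            (Vval κA κY ρ xh ah yh h τ false true))) := by
  classical
  have hN : N ≠ 0 := by
    intro h0
    rw [pfrac] at hp1
    subst h0
    simp at hp1
  have hg : Measurable (fun ξ : E × Bool × Bool => if τ ≤ h ξ.1 then (1:ℝ) else 0) :=
    Measurable.ite ((hmeas.comp measurable_fst) measurableSet_Ici)
      measurable_const measurable_const
  have hgb : ∀ ξ : E × Bool × Bool, (if τ ≤ h ξ.1 then (1:ℝ) else 0) ∈ Set.Icc (0:ℝ) 1 := by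
    intro ξ
    by_cases hc : τ ≤ h ξ.1 <;> simp [hc]
  have hpn : ∀ a y : Bool, 0 ≤ pfrac ah yh a y := by
    intro a y
    rw [pfrac]
    positivity
  set S : Set ℝ := {v : ℝ | ∃ Q ∈ Bset κA κY ρ xh ah yh,
      v = cexp Q (fun ξ => if τ ≤ h ξ.1 then 1 else 0) true true
        - cexp Q (fun ξ => if τ ≤ h ξ.1 then 1 else 0) false true} with hSdef
  have hB : emp xh ah yh ∈ Bset κA κY ρ xh ah yh :=
    ⟨emp_univ xh ah yh hN, by rw [wass_self]; exact zero_le,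
      fun a y => emp_K xh ah yh hN a y⟩
  have hSne : S.Nonempty := ⟨_, emp xh ah yh, hB, rfl⟩
  have hSsub : ∀ v ∈ S, -1 ≤ v ∧ v ≤ 1 := by
    intro v hv
    rw [hSdef] at hv
    obtain ⟨Q, hQ, rfl⟩ := hv
    haveI := hQ.1
    have b1 := cexp_mem_Icc hg hgb Q true true
    have b2 := cexp_mem_Icc hg hgb Q false true
    constructor <;> [linarith [b1.1, b2.2]; linarith [b1.2, b2.1]]
  have hSbA : BddAbove S := ⟨1, fun v hv => (hSsub v hv).2⟩
  have hSbB : BddBelow S := ⟨-1, fun v hv => (hSsub v hv).1⟩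
  have hSconv : Convex ℝ S := by
    intro v1 hv1 v2 hv2 t s ht hs hts
    rw [hSdef] at hv1 hv2 ⊢
    obtain ⟨Q1, hQ1, e1⟩ := hv1
    obtain ⟨Q2, hQ2, e2⟩ := hv2
    haveI := hQ1.1
    haveI := hQ2.1
    refine ⟨ENNReal.ofReal t • Q1 + ENNReal.ofReal s • Q2, ⟨?_, ?_, ?_⟩, ?_⟩
    · constructor
      rw [Measure.add_apply, Measure.smul_apply, Measure.smul_apply,
        measure_univ, measure_univ, smul_eq_mul, smul_eq_mul, mul_one, mul_one,
        ← ENNReal.ofReal_add ht hs, hts, ENNReal.ofReal_one]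
    · exact wass_convex κA κY Q1 Q2 _ _ _
        (by rw [← ENNReal.ofReal_add ht hs, hts, ENNReal.ofReal_one])
        _ ENNReal.ofReal_ne_top hQ1.2.1 hQ2.2.1
    · intro a y
      exact combo_K Q1 Q2 ht hs hts a y (hpn a y) (hQ1.2.2 a y) (hQ2.2.2 a y)
    · rw [cexp_combo hg hgb Q1 Q2 ht hs hts true true hp1
          (hQ1.2.2 true true) (hQ2.2.2 true true),
        cexp_combo hg hgb Q1 Q2 ht hs hts false true hp0
          (hQ1.2.2 false true) (hQ2.2.2 false true), e1, e2]
      simp only [smul_eq_mul]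
      ring
  have hE1 : {v : ℝ | ∃ Q ∈ Bset κA κY ρ xh ah yh,
      v = unfair (fun z => if τ ≤ z then 1 else 0) h Q} = abs '' S := by
    rw [hSdef]
    ext v
    constructor
    · rintro ⟨Q, hQ, rfl⟩
      exact ⟨_, ⟨Q, hQ, rfl⟩, rfl⟩
    · rintro ⟨w, ⟨Q, hQ, rfl⟩, rfl⟩
      exact ⟨Q, hQ, rfl⟩
  have hE2 : Vval κA κY ρ xh ah yh h τ true false = sSup S := by
    rw [hSdef]
    rfl
  have hE3 : Vval κA κY ρ xh ah yh h τ false true = -sInf S := by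
    have hT : {v : ℝ | ∃ Q ∈ Bset κA κY ρ xh ah yh,
        v = cexp Q (fun ξ => if τ ≤ h ξ.1 then 1 else 0) false true
          - cexp Q (fun ξ => if τ ≤ h ξ.1 then 1 else 0) true true} = Neg.neg '' S := by
      rw [hSdef]
      ext v
      constructor
      · rintro ⟨Q, hQ, rfl⟩
        exact ⟨_, ⟨Q, hQ, rfl⟩, by ring⟩
      · rintro ⟨w, ⟨Q, hQ, rfl⟩, rfl⟩
        exact ⟨Q, hQ, by ring⟩
    rw [show Vval κA κY ρ xh ah yh h τ false true
        = sSup {v : ℝ | ∃ Q ∈ Bset κA κY ρ xh ah yh,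
          v = cexp Q (fun ξ => if τ ≤ h ξ.1 then 1 else 0) false true
            - cexp Q (fun ξ => if τ ≤ h ξ.1 then 1 else 0) true true} from rfl,
      hT, aux_sSup_neg_image]
  constructor
  · rw [hE1, aux_sSup_abs_image hSne hSbA hSbB, hE2, hE3]
  · rw [hE1, aux_sInf_abs_image hSconv hSne hSbA hSbB, hE2, hE3]


end
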